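/- Under the Bakhvalov-type mesh assumptions, there exists a constant C > 0 depending only on σ and α (not on ε or N) such that x_{N/2+1} ≤ 1 − C·(σε/α)·ln N. -/
import Mathlib


open Real

/-- Bakhvalov-type mesh generating function evaluated at `t = j/N`:
`ψ(t) = 2τt` for `t < 1/2` and `ψ(t) = 1 + (σε/α)·ln(1 + 2(1-ε)(t-1))` for `t ≥ 1/2`,
where `τ = 1 + (σε/α)·ln ε`. -/
noncomputable def bX (α σ ε : ℝ) (N j : ℕ) : ℝ :=
  if (j : ℝ) / N < 1 / 2 then
    2 * (1 + σ * ε / α * Real.log ε) * ((j : ℝ) / N)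
  else
    1 + σ * ε / α * Real.log (1 + 2 * (1 - ε) * ((j : ℝ) / N - 1))


/-- There is a constant `C > 0` depending only on `σ` and `α`
such that `x_{N/2+1} ≤ 1 − C·(σε/α)·ln N` on the Bakhvalov-type mesh. -/
theorem statement5 (α σ : ℝ) (hα : 0 < α) (hσ : 0 < σ) :
    ∃ C > (0:ℝ), ∀ ε : ℝ, 0 < ε → ε < 1 →
      ∀ N : ℕ, 4 ≤ N → Even N → ε ≤ (N : ℝ)⁻¹ →
        (1:ℝ) / 2 ≤ 1 + σ * ε / α * Real.log ε →
        bX α σ ε N (N / 2 + 1) ≤ 1 - C * (σ * ε / α) * Real.log N := by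
  have hlog34 : Real.log 3 < Real.log 4 := by
    apply Real.log_lt_log <;> norm_num
  have hlog4 : (0:ℝ) < Real.log 4 := Real.log_pos (by norm_num)
  refine ⟨1 - Real.log 3 / Real.log 4, by
    rw [gt_iff_lt, sub_pos, div_lt_one hlog4]; exact hlog34, ?_⟩
  intro ε hε hε1 N hN4 hNe hεN _
  have hN0 : (0:ℝ) < N := by positivity
  have hNR4 : (4:ℝ) ≤ N := by exact_mod_cast hN4
  have h2N : 2 ∣ N := hNe.two_dvd
  have hj : ((N / 2 + 1 : ℕ) : ℝ) = (N : ℝ) / 2 + 1 := by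
    obtain ⟨m, rfl⟩ := h2N
    rw [Nat.mul_div_cancel_left m (by norm_num)]
    push_cast; ring
  have hjN : ((N / 2 + 1 : ℕ) : ℝ) / N = 1 / 2 + 1 / N := by
    rw [hj]; field_simp
  have hcond : ¬ (((N / 2 + 1 : ℕ) : ℝ) / N < 1 / 2) := by
    rw [hjN]; have : (0:ℝ) < 1 / N := by positivity
    linarith
  rw [bX, if_neg hcond, hjN]
  set c : ℝ := σ * ε / α with hc
  have hcpos : 0 < c := by positivity
  set u : ℝ := 1 + 2 * (1 - ε) * (1 / 2 + 1 / (N:ℝ) - 1) with hu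
  -- u = ε*(1 - 2/N) + 2/N
  have hu' : u = ε * (1 - 2 / N) + 2 / N := by
    rw [hu]; field_simp; ring
  have h2N' : (2:ℝ) / N ≤ 1 / 2 := by
    rw [div_le_div_iff₀ hN0 (by norm_num)]; linarith
  have hupos : 0 < u := by
    rw [hu']
    have h1 : (0:ℝ) < 2 / N := by positivity
    have h2 : 0 ≤ ε * (1 - 2 / N) := by
      apply mul_nonneg hε.le; linarith
    linarith
  have hule : u ≤ 3 / N := by
    rw [hu']
    have h1 : ε * (1 - 2 / N) ≤ ε := by nlinarith [div_pos (by norm_num : (0:ℝ)<2) hN0]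
    have h2 : ε ≤ 1 / N := by rwa [one_div]
    have : (1:ℝ)/N + 2/N = 3/N := by ring
    linarith
  have hlogu : Real.log u ≤ Real.log 3 - Real.log N := by
    calc Real.log u ≤ Real.log (3 / N) := Real.log_le_log hupos hule
      _ = Real.log 3 - Real.log N := Real.log_div (by norm_num) (ne_of_gt hN0)
  have hlogN : Real.log 4 ≤ Real.log N := Real.log_le_log (by norm_num) hNR4
  have hkey : Real.log u ≤ -((1 - Real.log 3 / Real.log 4) * Real.log N) := by
    have h3 : (0:ℝ) ≤ Real.log 3 := Real.log_nonneg (by norm_num)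
    have : Real.log 3 ≤ Real.log 3 / Real.log 4 * Real.log N := by
      rw [div_mul_eq_mul_div, le_div_iff₀ hlog4]
      nlinarith
    linarith
  have := mul_le_mul_of_nonneg_left hkey hcpos.le
  nlinarith [this]
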